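/- arXiv:math/0209407 — 3 statements merged into one kernel-verified Lean document; each statement's English description precedes it below -/
import Mathlib

section
/- Let p be a prime and g : ℤ_p → ℤ_p a 1-Lipschitz (compatible) function. Then the function f(x) = 1 + x + p^2 · g(x) is transitive modulo p^k for every k ≥ 1, i.e., it induces a single-cycle permutation on ℤ/p^k ℤ for all k. -/
/-- A function on the `p`-adic integers is *compatible* if it is 1-Lipschitz. -/
def IsCompatible {p : ℕ} [Fact p.Prime] (f : ℤ_[p] → ℤ_[p]) : Prop :=
  ∀ x y : ℤ_[p], ‖f x - f y‖ ≤ ‖x - y‖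

/-- `f` is transitive modulo `p^k`: it induces a single-cycle permutation of `ZMod (p^k)`. -/
def TransitiveMod {p : ℕ} [Fact p.Prime] (f : ℤ_[p] → ℤ_[p]) (k : ℕ) : Prop :=
  ∃ g : ZMod (p ^ k) → ZMod (p ^ k),
    (∀ x : ℤ_[p], g (PadicInt.toZModPow k x) = PadicInt.toZModPow k (f x)) ∧
    ∀ a b : ZMod (p ^ k), ∃ m : ℕ, g^[m] a = b

namespace Stmt17Aux

variable {p : ℕ} [hp : Fact p.Prime]

private lemma tri (a b : ℤ_[p]) {C : ℝ} (ha : ‖a‖ ≤ C) (hb : ‖b‖ ≤ C) : ‖a + b‖ ≤ C :=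
  le_trans (PadicInt.nonarchimedean a b) (max_le ha hb)

private lemma normp_nonneg : (0:ℝ) ≤ ‖(p : ℤ_[p])‖ := norm_nonneg _

private lemma normp_le_one : ‖(p : ℤ_[p])‖ ≤ 1 := PadicInt.norm_le_one _

private lemma normp_pow_le {m n : ℕ} (h : m ≤ n) :
    ‖(p : ℤ_[p])‖ ^ n ≤ ‖(p : ℤ_[p])‖ ^ m :=
  pow_le_pow_of_le_one normp_nonneg normp_le_one h

/-- Iterates of `f` distort differences by at most `‖p‖²`. -/
lemma iterP (f : ℤ_[p] → ℤ_[p])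
    (hP : ∀ x y, ‖f x - f y - (x - y)‖ ≤ ‖(p : ℤ_[p])‖ ^ 2 * ‖x - y‖) :
    ∀ n x y, ‖f^[n] x - f^[n] y - (x - y)‖ ≤ ‖(p : ℤ_[p])‖ ^ 2 * ‖x - y‖ := by
  intro n
  induction n with
  | zero =>
    intro x y
    simp only [Function.iterate_zero_apply, sub_self, norm_zero]
    positivity
  | succ n ih =>
    intro x y
    have huv : ‖f^[n] x - f^[n] y‖ ≤ ‖x - y‖ := by
      have h2 : f^[n] x - f^[n] y = (f^[n] x - f^[n] y - (x - y)) + (x - y) := by ring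
      rw [h2]
      refine tri _ _ ((ih x y).trans ?_) le_rfl
      exact mul_le_of_le_one_left (norm_nonneg _) (pow_le_one₀ normp_nonneg normp_le_one)
    simp only [Function.iterate_succ_apply']
    have h1 : f (f^[n] x) - f (f^[n] y) - (x - y)
        = (f (f^[n] x) - f (f^[n] y) - (f^[n] x - f^[n] y)) + (f^[n] x - f^[n] y - (x - y)) := by
      ring
    rw [h1]
    refine tri _ _ ((hP _ _).trans ?_) (ih x y)
    exact mul_le_mul_of_nonneg_left huv (by positivity)

/-- Key estimate: `f^[p^k] x ≡ x + p^k  (mod p^(k+1))`. -/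
lemma keyA (f : ℤ_[p] → ℤ_[p])
    (hP : ∀ x y, ‖f x - f y - (x - y)‖ ≤ ‖(p : ℤ_[p])‖ ^ 2 * ‖x - y‖)
    (hE : ∀ x, ‖f x - x - 1‖ ≤ ‖(p : ℤ_[p])‖ ^ 2) :
    ∀ k x, ‖f^[p ^ k] x - x - (p : ℤ_[p]) ^ k‖ ≤ ‖(p : ℤ_[p])‖ ^ (k + 1) := by
  intro k
  induction k with
  | zero =>
    intro x
    have h1 : f^[p ^ 0] x = f x := by rw [pow_zero, Function.iterate_one]
    rw [h1, pow_zero, zero_add]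
    exact (hE x).trans (normp_pow_le (m := 1) (n := 2) (by norm_num))
  | succ k ih =>
    intro x
    set F := f^[p ^ k] with hF
    set q : ℤ_[p] := (p : ℤ_[p]) ^ k with hq
    have hnq : ‖q‖ = ‖(p : ℤ_[p])‖ ^ k := norm_pow _ _
    have hstep : ∀ y, ‖F y - y‖ ≤ ‖(p : ℤ_[p])‖ ^ k := by
      intro y
      have h2 : F y - y = (F y - y - q) + q := by ring
      rw [h2]
      exact tri _ _ ((ih y).trans (normp_pow_le (Nat.le_succ k))) hnq.le
    have hOrb : ∀ j y, ‖F^[j] y - y‖ ≤ ‖(p : ℤ_[p])‖ ^ k := by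
      intro j
      induction j with
      | zero => intro y; simp [pow_nonneg normp_nonneg]
      | succ j ihj =>
        intro y
        rw [Function.iterate_succ_apply']
        have h2 : F (F^[j] y) - y = (F (F^[j] y) - F^[j] y) + (F^[j] y - y) := by ring
        rw [h2]
        exact tri _ _ (hstep _) (ihj y)
    have hEdiff : ∀ y z, ‖(F y - y - q) - (F z - z - q)‖
        ≤ ‖(p : ℤ_[p])‖ ^ 2 * ‖y - z‖ := by
      intro y z
      have h2 : (F y - y - q) - (F z - z - q) = F y - F z - (y - z) := by ring
      rw [h2]
      exact iterP f hP (p ^ k) y z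
    have main : ∀ j : ℕ, ‖F^[j] x - x - (j : ℤ_[p]) * q - (j : ℤ_[p]) * (F x - x - q)‖
        ≤ ‖(p : ℤ_[p])‖ ^ (k + 2) := by
      intro j
      induction j with
      | zero => simp [pow_nonneg normp_nonneg]
      | succ j ihj =>
        rw [Function.iterate_succ_apply']
        push_cast
        have h2 : F (F^[j] x) - x - ((j : ℤ_[p]) + 1) * q
              - ((j : ℤ_[p]) + 1) * (F x - x - q)
            = ((F (F^[j] x) - F^[j] x - q) - (F x - x - q))
              + (F^[j] x - x - (j : ℤ_[p]) * q - (j : ℤ_[p]) * (F x - x - q)) := by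
          ring
        rw [h2]
        refine tri _ _ ?_ ihj
        calc ‖(F (F^[j] x) - F^[j] x - q) - (F x - x - q)‖
            ≤ ‖(p : ℤ_[p])‖ ^ 2 * ‖F^[j] x - x‖ := hEdiff _ _
          _ ≤ ‖(p : ℤ_[p])‖ ^ 2 * ‖(p : ℤ_[p])‖ ^ k :=
              mul_le_mul_of_nonneg_left (hOrb j x) (by positivity)
          _ = ‖(p : ℤ_[p])‖ ^ (k + 2) := by ring
    have hiter : f^[p ^ (k + 1)] x = F^[p] x := by
      rw [hF, ← Function.iterate_mul, ← pow_succ]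
    rw [hiter]
    have h2 : F^[p] x - x - (p : ℤ_[p]) ^ (k + 1)
        = (F^[p] x - x - (p : ℤ_[p]) * q - (p : ℤ_[p]) * (F x - x - q))
          + (p : ℤ_[p]) * (F x - x - q) := by
      rw [hq, pow_succ]; ring
    rw [h2]
    refine tri _ _ ((main p).trans (normp_pow_le (by omega))) ?_
    rw [norm_mul]
    calc ‖(p : ℤ_[p])‖ * ‖F x - x - q‖
        ≤ ‖(p : ℤ_[p])‖ * ‖(p : ℤ_[p])‖ ^ (k + 1) :=
          mul_le_mul_of_nonneg_left (ih x) normp_nonneg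
      _ = ‖(p : ℤ_[p])‖ ^ (k + 2) := by ring

lemma cong_iff (k : ℕ) (x y : ℤ_[p]) :
    PadicInt.toZModPow k x = PadicInt.toZModPow k y ↔ ‖x - y‖ ≤ (p : ℝ) ^ (-(k : ℤ)) := by
  rw [← sub_eq_zero, ← map_sub, ← RingHom.mem_ker, PadicInt.ker_toZModPow,
    ← PadicInt.norm_le_pow_iff_mem_span_pow]

lemma normp_pow_eq (k : ℕ) : ‖(p : ℤ_[p])‖ ^ k = (p : ℝ) ^ (-(k : ℤ)) := by
  rw [PadicInt.norm_p, zpow_neg, zpow_natCast, inv_pow]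

lemma toZModPow_natCast_val (k : ℕ) (a : ZMod (p ^ k)) :
    PadicInt.toZModPow k ((a.val : ℤ_[p])) = a := by
  haveI : NeZero (p ^ k) := ⟨pow_ne_zero _ hp.out.ne_zero⟩
  rw [map_natCast]
  exact ZMod.natCast_rightInverse a

end Stmt17Aux

open Stmt17Aux in
theorem stmt17 {p : ℕ} [Fact p.Prime] (g : ℤ_[p] → ℤ_[p]) (hg : IsCompatible g) :
    ∀ k : ℕ, 1 ≤ k → TransitiveMod (fun x => 1 + x + (p : ℤ_[p]) ^ 2 * g x) k := by
  set f : ℤ_[p] → ℤ_[p] := fun x => 1 + x + (p : ℤ_[p]) ^ 2 * g x with hf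
  have hP : ∀ x y, ‖f x - f y - (x - y)‖ ≤ ‖(p : ℤ_[p])‖ ^ 2 * ‖x - y‖ := by
    intro x y
    have h2 : f x - f y - (x - y) = (p : ℤ_[p]) ^ 2 * (g x - g y) := by rw [hf]; ring
    rw [h2, norm_mul, norm_pow]
    exact mul_le_mul_of_nonneg_left (hg x y) (by positivity)
  have hE : ∀ x, ‖f x - x - 1‖ ≤ ‖(p : ℤ_[p])‖ ^ 2 := by
    intro x
    have h2 : f x - x - 1 = (p : ℤ_[p]) ^ 2 * g x := by rw [hf]; ring
    rw [h2, norm_mul, norm_pow]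
    exact mul_le_of_le_one_right (by positivity) (PadicInt.norm_le_one _)
  have keyA' := keyA f hP hE
  have hLip1 : ∀ x y : ℤ_[p], ‖f x - f y‖ ≤ ‖x - y‖ := by
    intro x y
    have h := iterP f hP 1 x y
    simp only [Function.iterate_one] at h
    have h2 : f x - f y = (f x - f y - (x - y)) + (x - y) := by ring
    rw [h2]
    refine tri _ _ (h.trans ?_) le_rfl
    exact mul_le_of_le_one_left (norm_nonneg _) (pow_le_one₀ normp_nonneg normp_le_one)
  -- translation lemma for iterates of f^[p^k]
  have L5 : ∀ (k j : ℕ) (c : ℤ_[p]),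
      ‖f^[j * p ^ k] c - c - (j : ℤ_[p]) * (p : ℤ_[p]) ^ k‖ ≤ ‖(p : ℤ_[p])‖ ^ (k + 1) := by
    intro k j
    induction j with
    | zero => intro c; simp [pow_nonneg normp_nonneg]
    | succ j ihj =>
      intro c
      have hmul : (j + 1) * p ^ k = p ^ k + j * p ^ k := by ring
      rw [hmul, Function.iterate_add_apply]
      push_cast
      set y := f^[j * p ^ k] c with hy
      have h2 : f^[p ^ k] y - c - ((j : ℤ_[p]) + 1) * (p : ℤ_[p]) ^ k
          = (f^[p ^ k] y - y - (p : ℤ_[p]) ^ k) + (y - c - (j : ℤ_[p]) * (p : ℤ_[p]) ^ k) := by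
        ring
      rw [h2]
      exact tri _ _ (keyA' k y) (ihj c)
  -- orbit of 0 hits everything mod p^k
  have orbit : ∀ k : ℕ, ∀ b : ZMod (p ^ k), ∃ m : ℕ,
      PadicInt.toZModPow k (f^[m] 0) = b := by
    intro k
    induction k with
    | zero =>
      intro b
      haveI : Subsingleton (ZMod (p ^ 0)) := by rw [pow_zero]; infer_instance
      exact ⟨0, Subsingleton.elim _ _⟩
    | succ k ih =>
      intro b
      obtain ⟨m, hm⟩ := ih ((ZMod.castHom (pow_dvd_pow p (Nat.le_succ k)) (ZMod (p ^ k))) b)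
      set c : ℤ_[p] := f^[m] 0 with hc
      set z : ℤ_[p] := ((b.val : ℕ) : ℤ_[p]) with hz
      have hzb : PadicInt.toZModPow (k + 1) z = b := toZModPow_natCast_val (k + 1) b
      have hzk : PadicInt.toZModPow k z
          = (ZMod.castHom (pow_dvd_pow p (Nat.le_succ k)) (ZMod (p ^ k))) b := by
        conv_lhs => rw [← PadicInt.zmod_cast_comp_toZModPow k (k + 1) (Nat.le_succ k)]
        rw [RingHom.comp_apply, hzb]
      have hcz : PadicInt.toZModPow k c = PadicInt.toZModPow k z := by rw [hm, hzk]
      have hdvd : (p : ℤ_[p]) ^ k ∣ (c - z) := by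
        rw [← Ideal.mem_span_singleton, ← PadicInt.norm_le_pow_iff_mem_span_pow]
        exact (cong_iff k c z).mp hcz
      obtain ⟨w, hw⟩ := hdvd
      haveI : NeZero (p ^ 1) := ⟨pow_ne_zero _ (Fact.out : p.Prime).ne_zero⟩
      set j : ℕ := (-(PadicInt.toZModPow 1 w)).val with hj
      have hj0 : PadicInt.toZModPow 1 (w + (j : ℤ_[p])) = PadicInt.toZModPow 1 0 := by
        rw [map_add, map_natCast, map_zero, hj,
          ZMod.natCast_rightInverse (-(PadicInt.toZModPow 1 w)), add_neg_cancel]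
      have hjn : ‖w + (j : ℤ_[p])‖ ≤ (p : ℝ) ^ (-((1 : ℕ) : ℤ)) := by
        have h3 := (cong_iff 1 (w + (j : ℤ_[p])) 0).mp hj0
        rwa [sub_zero] at h3
      refine ⟨j * p ^ k + m, ?_⟩
      rw [Function.iterate_add_apply, ← hc, ← hzb, cong_iff]
      have h2 : f^[j * p ^ k] c - z
          = (f^[j * p ^ k] c - c - (j : ℤ_[p]) * (p : ℤ_[p]) ^ k)
            + (p : ℤ_[p]) ^ k * (w + (j : ℤ_[p])) := by
        rw [mul_add, ← hw]; ring
      rw [h2]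
      refine tri _ _ ((L5 k j c).trans ?_) ?_
      · exact le_of_eq (normp_pow_eq (k + 1))
      · rw [norm_mul, norm_pow]
        calc ‖(p : ℤ_[p])‖ ^ k * ‖w + (j : ℤ_[p])‖
            ≤ ‖(p : ℤ_[p])‖ ^ k * (p : ℝ) ^ (-((1 : ℕ) : ℤ)) :=
              mul_le_mul_of_nonneg_left hjn (by positivity)
          _ = ‖(p : ℤ_[p])‖ ^ (k + 1) := by rw [← normp_pow_eq 1, ← pow_add]
          _ ≤ (p : ℝ) ^ (-((k + 1 : ℕ) : ℤ)) := le_of_eq (normp_pow_eq (k + 1))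
  intro k hk
  set G : ZMod (p ^ k) → ZMod (p ^ k) :=
    fun a => PadicInt.toZModPow k (f ((a.val : ℤ_[p]))) with hG
  have hGcomm : ∀ x : ℤ_[p], G (PadicInt.toZModPow k x) = PadicInt.toZModPow k (f x) := by
    intro x
    rw [hG]
    apply (cong_iff k _ _).mpr
    refine (hLip1 _ _).trans ?_
    exact (cong_iff k _ _).mp (toZModPow_natCast_val k (PadicInt.toZModPow k x))
  have hGiter : ∀ (m : ℕ) (x : ℤ_[p]),
      G^[m] (PadicInt.toZModPow k x) = PadicInt.toZModPow k (f^[m] x) := by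
    intro m
    induction m with
    | zero => intro x; simp
    | succ m ihm =>
      intro x
      rw [Function.iterate_succ_apply', Function.iterate_succ_apply', ihm, hGcomm]
  have hper : ∀ a : ZMod (p ^ k), G^[p ^ k] a = a := by
    intro a
    have h0 : a = PadicInt.toZModPow k ((a.val : ℤ_[p])) := (toZModPow_natCast_val k a).symm
    rw [h0, hGiter]
    apply (cong_iff k _ _).mpr
    set y : ℤ_[p] := ((a.val : ℕ) : ℤ_[p])
    have h2 : f^[p ^ k] y - y = (f^[p ^ k] y - y - (p : ℤ_[p]) ^ k) + (p : ℤ_[p]) ^ k := by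
      ring
    rw [h2, ← normp_pow_eq]
    exact tri _ _ ((keyA' k y).trans (normp_pow_le (Nat.le_succ k)))
      (norm_pow _ _).le
  have hperN : ∀ (s : ℕ) (a : ZMod (p ^ k)), (G^[p ^ k])^[s] a = a := by
    intro s
    induction s with
    | zero => intro a; rfl
    | succ s ihs => intro a; rw [Function.iterate_succ_apply', ihs, hper]
  refine ⟨G, hGcomm, ?_⟩
  intro a b
  obtain ⟨s, hs⟩ := orbit k a
  obtain ⟨t, ht⟩ := orbit k b
  refine ⟨t + s * (p ^ k - 1), ?_⟩
  have ha0 : a = G^[s] (PadicInt.toZModPow k 0) := by rw [hGiter, hs]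
  have hsum : t + s * (p ^ k - 1) + s = t + p ^ k * s := by
    obtain ⟨d, hd⟩ : ∃ d, p ^ k = d + 1 :=
      ⟨p ^ k - 1, (Nat.succ_pred_eq_of_pos (pow_pos (Fact.out : p.Prime).pos k)).symm⟩
    rw [hd]
    simp only [Nat.add_sub_cancel]
    ring
  rw [ha0, ← Function.iterate_add_apply, hsum, Function.iterate_add_apply,
    Function.iterate_mul, hperN, hGiter, ht]
end

section
/- Let p be a prime and f ∈ ℚ_p[x] an integer-valued polynomial (mapping ℤ_p into ℤ_p) of degree d > 1 that is 1-Lipschitz on ℤ_p and ergodic (transitive modulo p^k for all k ≥ 1). Then there exist no constants c, c_0, ..., c_r ∈ ℤ_p, not all zero modulo p, such that c + Σ_{i=0}^{r} c_i · f^{(n+i)}(x_0) ≡ 0 (mod p^k) for all n ≥ 0 and all k ≥ 1, where f^{(m)} denotes the m-fold iterate of f. -/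
/-- iterated composition of a polynomial -/
noncomputable def fiterAux {p : ℕ} [Fact p.Prime] (f : Polynomial ℚ_[p]) : ℕ → Polynomial ℚ_[p]
  | 0 => Polynomial.X
  | (i + 1) => (fiterAux f i).comp f

lemma dvd_iff_norm_le' {p : ℕ} [Fact p.Prime] (x : ℤ_[p]) (n : ℕ) :
    (p : ℤ_[p]) ^ n ∣ x ↔ ‖x‖ ≤ (p : ℝ) ^ (-(n : ℤ)) := by
  rw [PadicInt.norm_le_pow_iff_mem_span_pow, Ideal.mem_span_singleton]

lemma eq_zero_of_forall_pow_dvd {p : ℕ} [Fact p.Prime] (v : ℤ_[p])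
    (h : ∀ k : ℕ, (p : ℤ_[p]) ^ k ∣ v) : v = 0 := by
  by_contra hv
  have hp : (1 : ℝ) < p := by exact_mod_cast (Fact.out : p.Prime).one_lt
  have hvpos : 0 < ‖v‖ := by simpa [norm_pos_iff] using hv
  obtain ⟨k, hk⟩ := exists_pow_lt_of_lt_one hvpos (by
    rw [inv_lt_one_iff₀]; right; exact hp : (p : ℝ)⁻¹ < 1)
  have := (dvd_iff_norm_le' v k).mp (h k)
  rw [zpow_neg, zpow_natCast, ← inv_pow] at this
  linarith

lemma fiterAux_natDegree {p : ℕ} [Fact p.Prime] (f : Polynomial ℚ_[p]) :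
    ∀ i : ℕ, (fiterAux f i).natDegree = f.natDegree ^ i := by
  intro i
  induction i with
  | zero => simp [fiterAux]
  | succ i ih =>
    rw [fiterAux, Polynomial.natDegree_comp, ih, pow_succ]

theorem stmt18 {p : ℕ} [Fact p.Prime] (f : Polynomial ℚ_[p]) (F : ℤ_[p] → ℤ_[p])
    (hF : ∀ z : ℤ_[p], (F z : ℚ_[p]) = f.eval (z : ℚ_[p]))
    (hdeg : 1 < f.natDegree) (hcomp : IsCompatible F)
    (herg : ∀ k : ℕ, 1 ≤ k → TransitiveMod F k) (x₀ : ℤ_[p]) :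
    ¬ ∃ (r : ℕ) (c : ℤ_[p]) (cs : Fin (r + 1) → ℤ_[p]),
      (¬ (p : ℤ_[p]) ∣ c ∨ ∃ i, ¬ (p : ℤ_[p]) ∣ cs i) ∧
      ∀ (n k : ℕ),
        (p : ℤ_[p]) ^ k ∣ c + ∑ i : Fin (r + 1), cs i * F^[n + (i : ℕ)] x₀ := by
  classical
  rintro ⟨r, c, cs, hcond, hdiv⟩
  haveI : Infinite ℤ_[p] := Infinite.of_injective (Nat.cast : ℕ → ℤ_[p]) Nat.cast_injective
  -- the relation holds exactly
  have h0 : ∀ n : ℕ, c + ∑ i : Fin (r + 1), cs i * F^[n + (i : ℕ)] x₀ = 0 := fun n =>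
    eq_zero_of_forall_pow_dvd _ (fun k => hdiv n k)
  -- iterates of F are compatible
  have hcompIt : ∀ i : ℕ, IsCompatible (F^[i]) := by
    intro i
    induction i with
    | zero => intro x y; simp
    | succ i ih =>
      intro x y
      rw [Function.iterate_succ_apply', Function.iterate_succ_apply']
      exact le_trans (hcomp _ _) (ih x y)
  -- 1-Lipschitz maps preserve divisibility of differences
  have hdvdF : ∀ (i k : ℕ) (a b : ℤ_[p]), (p : ℤ_[p]) ^ k ∣ a - b →
      (p : ℤ_[p]) ^ k ∣ F^[i] a - F^[i] b := by
    intro i k a b hab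
    rw [dvd_iff_norm_le'] at hab ⊢
    exact le_trans (hcompIt i a b) hab
  -- density of the orbit (in divisibility form)
  have hdense : ∀ (z : ℤ_[p]) (k : ℕ), ∃ n : ℕ, (p : ℤ_[p]) ^ k ∣ F^[n] x₀ - z := by
    intro z k
    rcases Nat.eq_zero_or_pos k with hk | hk
    · exact ⟨0, by simp [hk]⟩
    obtain ⟨g, hg, htr⟩ := herg k hk
    have hit : ∀ (n : ℕ) (x : ℤ_[p]),
        PadicInt.toZModPow k (F^[n] x) = g^[n] (PadicInt.toZModPow k x) := by
      intro n
      induction n with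
      | zero => intro x; simp
      | succ n ih =>
        intro x
        rw [Function.iterate_succ_apply, Function.iterate_succ_apply, ih (F x), ← hg]
    obtain ⟨m, hm⟩ := htr (PadicInt.toZModPow k x₀) (PadicInt.toZModPow k z)
    refine ⟨m, ?_⟩
    have hker : PadicInt.toZModPow k (F^[m] x₀ - z) = 0 := by
      rw [map_sub, hit, hm, sub_self]
    have := PadicInt.ker_toZModPow (p := p) k
    have hmem : F^[m] x₀ - z ∈ RingHom.ker (PadicInt.toZModPow (p := p) k) := hker
    rw [this, Ideal.mem_span_singleton] at hmem
    exact hmem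
  -- the relation holds everywhere on ℤ_[p]
  have hG : ∀ z : ℤ_[p], c + ∑ i : Fin (r + 1), cs i * F^[(i : ℕ)] z = 0 := by
    intro z
    apply eq_zero_of_forall_pow_dvd
    intro k
    obtain ⟨n, hn⟩ := hdense z k
    set w : ℤ_[p] := F^[n] x₀ with hwdef
    have hw : c + ∑ i : Fin (r + 1), cs i * F^[(i : ℕ)] w = 0 := by
      have h0n := h0 n
      have hrw : ∀ i : Fin (r + 1), F^[n + (i : ℕ)] x₀ = F^[(i : ℕ)] w := by
        intro i
        rw [add_comm, Function.iterate_add_apply]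
      rwa [Finset.sum_congr rfl (fun i _ => by rw [hrw i])] at h0n
    have key : c + ∑ i : Fin (r + 1), cs i * F^[(i : ℕ)] z =
        (c + ∑ i : Fin (r + 1), cs i * F^[(i : ℕ)] w) +
          ∑ i : Fin (r + 1), cs i * (F^[(i : ℕ)] z - F^[(i : ℕ)] w) := by
      simp only [mul_sub, Finset.sum_sub_distrib]
      ring
    rw [key, hw, zero_add]
    refine Finset.dvd_sum (fun i _ => Dvd.dvd.mul_left ?_ _)
    apply hdvdF
    have : (p : ℤ_[p]) ^ k ∣ -(w - z) := dvd_neg.mpr hn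
    simpa using this
  -- build the polynomial identity
  set d := f.natDegree with hd
  set P : Polynomial ℚ_[p] :=
    Polynomial.C (c : ℚ_[p]) +
      ∑ i : Fin (r + 1), Polynomial.C ((cs i : ℚ_[p])) * fiterAux f (i : ℕ) with hP
  have heval : ∀ (i : ℕ) (z : ℤ_[p]),
      ((F^[i] z : ℤ_[p]) : ℚ_[p]) = (fiterAux f i).eval (z : ℚ_[p]) := by
    intro i
    induction i with
    | zero => intro z; simp [fiterAux]
    | succ i ih =>
      intro z
      rw [Function.iterate_succ_apply, ih (F z), fiterAux, Polynomial.eval_comp, hF]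
  have hProot : ∀ z : ℤ_[p], P.eval (z : ℚ_[p]) = 0 := by
    intro z
    have := congrArg (fun t : ℤ_[p] => (t : ℚ_[p])) (hG z)
    simp only [PadicInt.coe_add, PadicInt.coe_zero] at this
    rw [hP, Polynomial.eval_add, Polynomial.eval_C, Polynomial.eval_finset_sum]
    rw [show ((∑ i : Fin (r + 1), cs i * F^[(i : ℕ)] z : ℤ_[p]) : ℚ_[p]) =
        ∑ i : Fin (r + 1), ((cs i : ℚ_[p]) * ((F^[(i : ℕ)] z : ℤ_[p]) : ℚ_[p])) from
      map_sum (PadicInt.Coe.ringHom (p := p)) _ _] at this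
    simp only [heval] at this
    simpa using this
  -- P vanishes on the infinite set of p-adic integers, hence P = 0
  have hinj : Function.Injective ((↑) : ℤ_[p] → ℚ_[p]) := Subtype.coe_injective
  have hP0 : P = 0 := by
    apply Polynomial.eq_zero_of_infinite_isRoot
    apply Set.Infinite.mono (s := Set.range ((↑) : ℤ_[p] → ℚ_[p]))
    · rintro x ⟨z, rfl⟩
      exact hProot z
    · exact @Set.infinite_range_of_injective ℤ_[p] ℚ_[p] ‹Infinite ℤ_[p]› _ hinj
  -- case split on whether all cs vanish
  by_cases hcs : ∀ i, cs i = 0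
  · have hc : c = 0 := by
      have := h0 0
      simp [hcs] at this
      exact this
    rcases hcond with h | ⟨i, h⟩
    · exact h (hc ▸ dvd_zero _)
    · exact h (hcs i ▸ dvd_zero _)
  · push_neg at hcs
    set S : Finset (Fin (r + 1)) := Finset.univ.filter (fun i => cs i ≠ 0) with hS
    have hSne : S.Nonempty := by
      obtain ⟨i, hi⟩ := hcs
      exact ⟨i, by simp [hS, hi]⟩
    set j : Fin (r + 1) := S.max' hSne with hj
    have hjS : j ∈ S := S.max'_mem hSne
    have hcj : cs j ≠ 0 := by simpa [hS] using hjS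
    have hmax : ∀ i : Fin (r + 1), j < i → cs i = 0 := by
      intro i hi
      by_contra hne
      exact absurd (S.le_max' i (by simp [hS, hne])) (not_le.mpr hi)
    -- extract coefficient at degree d ^ j
    have hdpos : 0 < d ^ (j : ℕ) := Nat.pow_pos (by omega)
    have hcoeff := congrArg (fun q : Polynomial ℚ_[p] => q.coeff (d ^ (j : ℕ))) hP0
    simp only [hP, Polynomial.coeff_add, Polynomial.finset_sum_coeff,
      Polynomial.coeff_C_mul, Polynomial.coeff_C, Polynomial.coeff_zero] at hcoeff
    rw [if_neg (by omega)] at hcoeff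
    rw [zero_add, Finset.sum_eq_single j] at hcoeff
    · -- the j-th term is nonzero
      have hndj : (fiterAux f (j : ℕ)).natDegree = d ^ (j : ℕ) := fiterAux_natDegree f _
      have hfj : fiterAux f (j : ℕ) ≠ 0 := by
        intro h
        rw [h, Polynomial.natDegree_zero] at hndj
        omega
      have hlc : (fiterAux f (j : ℕ)).coeff (d ^ (j : ℕ)) ≠ 0 := by
        rw [← hndj]
        exact Polynomial.leadingCoeff_ne_zero.mpr hfj
      have hcjQ : ((cs j : ℚ_[p])) ≠ 0 := fun h => hcj (PadicInt.coe_eq_zero.mp h)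
      exact mul_ne_zero hcjQ hlc hcoeff
    · intro i _ hij
      rcases lt_or_gt_of_ne hij with h | h
      · -- i < j : degree too small
        have : (fiterAux f (i : ℕ)).natDegree < d ^ (j : ℕ) := by
          rw [fiterAux_natDegree f]
          exact Nat.pow_lt_pow_right hdeg h
        rw [Polynomial.coeff_eq_zero_of_natDegree_lt this, mul_zero]
      · -- j < i : coefficient cs i = 0
        rw [hmax i h]
        simp
    · intro h
      exact absurd (Finset.mem_univ j) h
end

section
/- For p = 2, the function f : ℤ_2 → ℤ_2 defined by f(x) = 1 + x + 4·(−1)^{1+x} (where (−1)^x denotes the 2-adically continuous extension, equal to Σ_{j≥0} (−2)^j·C(x,j)) is compatible and ergodic (transitive modulo 2^k for all k), and the orbit sequence x_{n+1} = f(x_n) satisfies the linear relation x_{n+2} = x_n + 2 for all n ≥ 0. -/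
open PadicInt

lemma tz_eq_iff (k : ℕ) (x y : ℤ_[2]) :
    PadicInt.toZModPow k x = PadicInt.toZModPow k y ↔ ‖x - y‖ ≤ (2 : ℝ) ^ (-(k : ℤ)) := by
  have : ((2 : ℕ) : ℝ) = (2 : ℝ) := by norm_num
  rw [← this, PadicInt.norm_le_pow_iff_mem_span_pow, ← PadicInt.ker_toZModPow,
    RingHom.mem_ker, map_sub, sub_eq_zero]

section Edef
variable (E : ℤ_[2] → ℤ_[2]) (hE : Continuous E) (hEn : ∀ n : ℕ, E n = (-1) ^ n)

include hE hEn in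
lemma E_add_one (x : ℤ_[2]) : E (x + 1) = -E x := by
  have h : (fun y : ℤ_[2] => E (y + 1)) = fun y => -E y := by
    apply (PadicInt.denseRange_natCast).equalizer
      (hE.comp (by continuity)) hE.neg
    funext n
    have h1 : ((n : ℤ_[2]) + 1) = ((n + 1 : ℕ) : ℤ_[2]) := by push_cast; ring
    simp only [Function.comp_apply, h1, hEn, pow_succ, Pi.neg_apply]
    ring
  exact congrFun h x

include hE hEn in
lemma E_add_two_mul (x z : ℤ_[2]) : E (x + 2 * z) = E x := by
  have hnat : ∀ (m : ℕ) (y : ℤ_[2]), E (y + 2 * m) = E y := by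
    intro m
    have h : (fun y : ℤ_[2] => E (y + 2 * m)) = fun y => E y := by
      apply (PadicInt.denseRange_natCast).equalizer
        (hE.comp (by continuity)) hE
      funext n
      have h1 : ((n : ℤ_[2]) + 2 * m) = ((n + 2 * m : ℕ) : ℤ_[2]) := by push_cast; ring
      simp only [Function.comp_apply, h1, hEn, pow_add, pow_mul]
      norm_num
    exact fun y => congrFun h y
  have h : (fun w : ℤ_[2] => E (x + 2 * w)) = fun _ => E x := by
    apply (PadicInt.denseRange_natCast).equalizer
      (hE.comp (by continuity)) continuous_const
    funext m
    exact hnat m x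
  exact congrFun h z

variable (F : ℤ_[2] → ℤ_[2]) (hF : ∀ x, F x = 1 + x + 4 * E (1 + x))

include hE hEn hF in
lemma F_sq (x : ℤ_[2]) : F (F x) = x + 2 := by
  have h1 : (1 : ℤ_[2]) + F x = (1 + x + 1) + 2 * (2 * E (1 + x)) := by rw [hF]; ring
  have h2 : E (1 + F x) = E (1 + x + 1) := by
    rw [h1, E_add_two_mul E hE hEn]
  rw [hF (F x), h2, show (1 : ℤ_[2]) + x + 1 = (1 + x) + 1 by ring,
    E_add_one E hE hEn, hF]
  ring

include hE hEn hF in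
lemma F_compat : IsCompatible F := by
  intro x y
  by_cases h : (2 : ℤ_[2]) ∣ x - y
  · obtain ⟨z, hz⟩ := h
    have hy : y = x + 2 * (-z) := by
      have : x = y + 2 * z := by linear_combination hz
      rw [this]; ring
    have : E (1 + y) = E (1 + x) := by
      rw [hy, show (1 : ℤ_[2]) + (x + 2 * (-z)) = (1 + x) + 2 * (-z) by ring,
        E_add_two_mul E hE hEn]
    have hfs : F x - F y = x - y := by rw [hF, hF, this]; ring
    rw [hfs]
  · have h1 : ‖x - y‖ = 1 := by
      rcases lt_or_eq_of_le (PadicInt.norm_le_one (x - y)) with h' | h'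
      · exact absurd ((PadicInt.norm_lt_one_iff_dvd _).1 (by exact_mod_cast h')) h
      · exact h'
    rw [h1]
    exact PadicInt.norm_le_one _

include hE hEn hF in
lemma F_trans (k : ℕ) : TransitiveMod F k := by
  haveI : NeZero ((2 : ℕ) ^ k) := ⟨pow_ne_zero k two_ne_zero⟩
  have hcomp := F_compat E hE hEn F hF
  have hmod : ∀ x y : ℤ_[2], toZModPow k x = toZModPow k y →
      toZModPow k (F x) = toZModPow k (F y) := by
    intro x y h
    rw [tz_eq_iff] at h ⊢
    exact le_trans (hcomp x y) h
  set L : ZMod (2 ^ k) → ℤ_[2] := fun a => ((a.val : ℕ) : ℤ_[2]) with hL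
  have hla : ∀ a : ZMod (2 ^ k), toZModPow k (L a) = a := by
    intro a
    simp only [hL, map_natCast, ZMod.natCast_zmod_val]
  set g : ZMod (2 ^ k) → ZMod (2 ^ k) := fun a => toZModPow k (F (L a)) with hg
  have h1 : ∀ x : ℤ_[2], g (toZModPow k x) = toZModPow k (F x) :=
    fun x => hmod _ _ (hla _)
  have hiter : ∀ (m : ℕ) (x : ℤ_[2]), g^[m] (toZModPow k x) = toZModPow k (F^[m] x) := by
    intro m
    induction m with
    | zero => intro x; simp
    | succ m ih =>
      intro x
      rw [Function.iterate_succ_apply', Function.iterate_succ_apply', ih, h1]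
  have hF2 : ∀ x : ℤ_[2], F^[2] x = x + 2 := by
    intro x
    show F (F x) = x + 2
    exact F_sq E hE hEn F hF x
  have g2 : ∀ y : ZMod (2 ^ k), g^[2] y = y + 2 := by
    intro y
    have := hiter 2 (L y)
    rw [hla, hF2] at this
    rw [this, map_add, hla, map_ofNat]
  have geven : ∀ (m : ℕ) (y : ZMod (2 ^ k)), g^[2 * m] y = y + 2 * (m : ZMod (2 ^ k)) := by
    intro m
    induction m with
    | zero => intro y; simp
    | succ m ih =>
      intro y
      have h' : 2 * (m + 1) = 2 * m + 2 := by ring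
      rw [h', Function.iterate_add_apply, g2, ih]
      push_cast
      ring
  refine ⟨g, h1, ?_⟩
  intro a b
  have hb : b = a + ((b - a).val : ZMod (2 ^ k)) := by
    rw [ZMod.natCast_zmod_val]; ring
  rcases Nat.even_or_odd (b - a).val with ⟨m, hm⟩ | ⟨m, hm⟩
  · refine ⟨2 * m, ?_⟩
    rw [geven, hb, hm]
    push_cast
    ring
  · set c := g a with hc
    have hce : c = 1 + a + 4 * toZModPow k (E (1 + L a)) := by
      show toZModPow k (F (L a)) = _
      rw [hF]
      simp only [map_add, map_mul, map_one, map_ofNat, hla]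
    set e := toZModPow k (E (1 + L a)) with he
    set w : ZMod (2 ^ k) := (m : ZMod (2 ^ k)) - 2 * e with hw
    have hbc : b = c + 2 * w := by
      rw [hb, hm, hce, hw]
      push_cast
      ring
    refine ⟨2 * w.val + 1, ?_⟩
    rw [Function.iterate_add_apply, Function.iterate_one, ← hc, geven, hbc,
      ZMod.natCast_zmod_val]

end Edef

theorem stmt19 (E : ℤ_[2] → ℤ_[2]) (hE : Continuous E)
    (hEn : ∀ n : ℕ, E n = (-1) ^ n) :
    letI f : ℤ_[2] → ℤ_[2] := fun x => 1 + x + 4 * E (1 + x)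
    IsCompatible f ∧ (∀ k : ℕ, 1 ≤ k → TransitiveMod f k) ∧
      ∀ (x₀ : ℤ_[2]) (n : ℕ), f^[n + 2] x₀ = f^[n] x₀ + 2 := by
  set F : ℤ_[2] → ℤ_[2] := fun x => 1 + x + 4 * E (1 + x) with hFdef
  have hF : ∀ x, F x = 1 + x + 4 * E (1 + x) := fun _ => rfl
  refine ⟨F_compat E hE hEn F hF, fun k _ => F_trans E hE hEn F hF k, ?_⟩
  intro x₀ n
  have h2 : ∀ x : ℤ_[2], F^[2] x = x + 2 := by
    intro x
    show F (F x) = x + 2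
    exact F_sq E hE hEn F hF x
  rw [show n + 2 = 2 + n from Nat.add_comm n 2, Function.iterate_add_apply]
  exact h2 _
end
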